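/- Partial fraction decomposition: for positive integers $m, n$ and real $\mu$, $\frac{1}{(m-i\mu)\cdots(1-i\mu)(1+i\mu)\cdots(n+i\mu)} = \sum_{k=1}^m \frac{a_k(m,n)}{k - i\mu} + \sum_{k=1}^n \frac{b_k(m,n)}{k + i\mu}$ where $a_k(m,n) = \frac{(-1)^{k-1} k}{(m-k)!\,(n+k)!}$ and $b_k(m,n) = \frac{(-1)^{k-1} k}{(n-k)!\,(m+k)!}$. -/
import Mathlib


open Complex Finset Polynomial

lemma pfd_nat_prod_add (n k : ℕ) : (∏ j ∈ Icc 1 n, (j + k)) * k.factorial = (n + k).factorial := by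
  induction n with
  | zero => simp
  | succ n ih =>
    rw [Finset.prod_Icc_succ_top (by omega), mul_right_comm, ih]
    rw [show n + 1 + k = (n + k) + 1 by omega, Nat.factorial_succ]
    ring

lemma pfd_prod_Icc_id (n : ℕ) : ∏ j ∈ Icc 1 n, j = n.factorial := by
  induction n with
  | zero => simp
  | succ n ih => rw [Finset.prod_Icc_succ_top (by omega), ih, Nat.factorial_succ]; ring

lemma pfd_nat_prod_reflect (r : ℕ) : ∏ j ∈ Icc 1 r, (r + 1 - j) = r.factorial := by
  rw [← pfd_prod_Icc_id r]
  apply Finset.prod_nbij' (fun j => r + 1 - j) (fun j => r + 1 - j) <;>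
    intros <;> simp_all [Finset.mem_Icc] <;> omega

lemma pfd_nat_prod_shift (k m : ℕ) : ∏ j ∈ Icc (k+1) m, (j - k) = (m - k).factorial := by
  rw [← pfd_prod_Icc_id (m - k)]
  apply Finset.prod_nbij' (fun j => j - k) (fun j => j + k) <;>
    intros <;> simp_all [Finset.mem_Icc] <;> omega

lemma pfd_prod_add_C (n k : ℕ) :
    ∏ j ∈ Icc 1 n, ((j:ℂ) + k) = ((n+k).factorial : ℂ) / (k.factorial : ℂ) := by
  rw [eq_div_iff (by exact_mod_cast k.factorial_ne_zero)]
  have := pfd_nat_prod_add n k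
  calc (∏ j ∈ Icc 1 n, ((j:ℂ) + k)) * (k.factorial : ℂ)
      = (((∏ j ∈ Icc 1 n, (j + k)) * k.factorial : ℕ) : ℂ) := by push_cast; ring
    _ = _ := by rw [this]

lemma pfd_prod_sub_C (m k : ℕ) (hk1 : 1 ≤ k) (hkm : k ≤ m) :
    ∏ j ∈ (Icc 1 m).erase k, ((j:ℂ) - k)
      = (-1)^(k-1) * ((k-1).factorial : ℂ) * ((m-k).factorial : ℂ) := by
  have hsplit : (Icc 1 m).erase k = Icc 1 (k-1) ∪ Icc (k+1) m := by
    ext j; simp only [Finset.mem_erase, Finset.mem_Icc, Finset.mem_union]; omega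
  have hdisj : Disjoint (Icc 1 (k-1)) (Icc (k+1) m) := by
    rw [Finset.disjoint_left]; intro j hj hj'
    simp only [Finset.mem_Icc] at hj hj'; omega
  rw [hsplit, Finset.prod_union hdisj]
  have h1 : ∏ j ∈ Icc 1 (k-1), ((j:ℂ) - k) = (-1)^(k-1) * ((k-1).factorial : ℂ) := by
    have hc : ∀ j ∈ Icc 1 (k-1), ((j:ℂ) - k) = (-1) * (((k - j : ℕ)):ℂ) := by
      intro j hj; simp only [Finset.mem_Icc] at hj
      rw [Nat.cast_sub (by omega)]; ring
    have hn : ∏ j ∈ Icc 1 (k-1), (k - j) = (k-1).factorial := by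
      rw [← pfd_nat_prod_reflect (k-1)]
      exact Finset.prod_congr rfl (fun j hj => by omega)
    rw [Finset.prod_congr rfl hc, Finset.prod_mul_distrib, Finset.prod_const, ← Nat.cast_prod,
      hn, Nat.card_Icc, Nat.add_sub_cancel]
  have h2 : ∏ j ∈ Icc (k+1) m, ((j:ℂ) - k) = ((m-k).factorial : ℂ) := by
    have hc : ∀ j ∈ Icc (k+1) m, ((j:ℂ) - k) = (((j - k : ℕ)):ℂ) := by
      intro j hj; simp only [Finset.mem_Icc] at hj
      rw [Nat.cast_sub (by omega)]
    rw [Finset.prod_congr rfl hc, ← Nat.cast_prod, pfd_nat_prod_shift]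
  rw [h1, h2]

lemma pfd_scalar (m n k : ℕ) (hk1 : 1 ≤ k) :
    ((-1:ℂ)^(k-1) * k / (((m-k).factorial : ℂ) * ((n+k).factorial : ℂ)))
      * ((-1:ℂ)^(k-1) * ((k-1).factorial : ℂ) * ((m-k).factorial : ℂ))
      * (((n+k).factorial : ℂ) / (k.factorial : ℂ)) = 1 := by
  have hpow : ((-1:ℂ))^(k-1) * ((-1:ℂ))^(k-1) = 1 := by
    rw [← mul_pow]; norm_num
  have hfac : (k:ℂ) * ((k-1).factorial : ℂ) = (k.factorial : ℂ) := by
    exact_mod_cast congrArg (Nat.cast : ℕ → ℂ) (Nat.mul_factorial_pred (by omega))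
  have h1 : ((m-k).factorial : ℂ) ≠ 0 := by exact_mod_cast Nat.factorial_ne_zero _
  have h2 : ((n+k).factorial : ℂ) ≠ 0 := by exact_mod_cast Nat.factorial_ne_zero _
  have h3 : (k.factorial : ℂ) ≠ 0 := by exact_mod_cast Nat.factorial_ne_zero _
  field_simp
  rw [← hfac]
  ring_nf
  have h4 : ((-1:ℂ))^((k-1)*2) = 1 := by
    rw [mul_comm, pow_mul]; norm_num
  rw [h4, mul_one]

lemma pfd_poly (m n : ℕ) (hm : 1 ≤ m) (hn : 1 ≤ n) :
    (∑ k ∈ Icc 1 m, Polynomial.C ((-1:ℂ)^(k-1) * k / (((m-k).factorial : ℂ) * ((n+k).factorial : ℂ)))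
        * ((∏ j ∈ (Icc 1 m).erase k, (Polynomial.C (j:ℂ) - X)) * ∏ j ∈ Icc 1 n, (Polynomial.C (j:ℂ) + X)))
    + (∑ k ∈ Icc 1 n, Polynomial.C ((-1:ℂ)^(k-1) * k / (((n-k).factorial : ℂ) * ((m+k).factorial : ℂ)))
        * ((∏ j ∈ Icc 1 m, (Polynomial.C (j:ℂ) - X)) * ∏ j ∈ (Icc 1 n).erase k, (Polynomial.C (j:ℂ) + X)))
    = 1 := by
  classical
  set F : Polynomial ℂ :=
    (∑ k ∈ Icc 1 m, Polynomial.C ((-1:ℂ)^(k-1) * k / (((m-k).factorial : ℂ) * ((n+k).factorial : ℂ)))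
        * ((∏ j ∈ (Icc 1 m).erase k, (Polynomial.C (j:ℂ) - X)) * ∏ j ∈ Icc 1 n, (Polynomial.C (j:ℂ) + X)))
    + (∑ k ∈ Icc 1 n, Polynomial.C ((-1:ℂ)^(k-1) * k / (((n-k).factorial : ℂ) * ((m+k).factorial : ℂ)))
        * ((∏ j ∈ Icc 1 m, (Polynomial.C (j:ℂ) - X)) * ∏ j ∈ (Icc 1 n).erase k, (Polynomial.C (j:ℂ) + X)))
    with hF
  have hdeg1 : ∀ (s : Finset ℕ), (∏ j ∈ s, (Polynomial.C (j:ℂ) - X)).natDegree ≤ s.card := by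
    intro s
    refine le_trans (Polynomial.natDegree_prod_le _ _) ?_
    refine le_trans (Finset.sum_le_card_nsmul s _ 1 (fun j _ => ?_)) (by simp)
    refine le_trans (Polynomial.natDegree_sub_le _ _) ?_
    simp
  have hdeg2 : ∀ (s : Finset ℕ), (∏ j ∈ s, (Polynomial.C (j:ℂ) + X)).natDegree ≤ s.card := by
    intro s
    refine le_trans (Polynomial.natDegree_prod_le _ _) ?_
    refine le_trans (Finset.sum_le_card_nsmul s _ 1 (fun j _ => ?_)) (by simp)
    refine le_trans (Polynomial.natDegree_add_le _ _) ?_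
    simp
  have hcard_m : (Icc 1 m).card = m := by rw [Nat.card_Icc]; omega
  have hcard_n : (Icc 1 n).card = n := by rw [Nat.card_Icc]; omega
  have hdegF : F.natDegree ≤ m + n - 1 := by
    rw [hF]
    refine le_trans (Polynomial.natDegree_add_le _ _) ?_
    rw [max_le_iff]
    constructor
    · refine Polynomial.natDegree_sum_le_of_forall_le _ _ (fun k hk => ?_)
      refine le_trans (Polynomial.natDegree_mul_le) ?_
      rw [Polynomial.natDegree_C, zero_add]
      refine le_trans (Polynomial.natDegree_mul_le) ?_
      have := hdeg1 ((Icc 1 m).erase k)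
      have := hdeg2 (Icc 1 n)
      have hke : ((Icc 1 m).erase k).card = m - 1 := by
        rw [Finset.card_erase_of_mem hk, hcard_m]
      omega
    · refine Polynomial.natDegree_sum_le_of_forall_le _ _ (fun k hk => ?_)
      refine le_trans (Polynomial.natDegree_mul_le) ?_
      rw [Polynomial.natDegree_C, zero_add]
      refine le_trans (Polynomial.natDegree_mul_le) ?_
      have := hdeg1 (Icc 1 m)
      have := hdeg2 ((Icc 1 n).erase k)
      have hke : ((Icc 1 n).erase k).card = n - 1 := by
        rw [Finset.card_erase_of_mem hk, hcard_n]
      omega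
  -- evaluation points
  set S : Finset ℂ := (Icc 1 m).image (Nat.cast : ℕ → ℂ) ∪ (Icc 1 n).image (fun k : ℕ => -(k:ℂ)) with hS
  have hcardS : S.card = m + n := by
    rw [hS, Finset.card_union_of_disjoint, Finset.card_image_of_injective _ (fun a b h => by
        exact_mod_cast h),
      Finset.card_image_of_injective _ (fun a b h => by
        have := neg_injective h; exact_mod_cast this), hcard_m, hcard_n]
    rw [Finset.disjoint_left]
    rintro x hx hy
    obtain ⟨j, hj, rfl⟩ := Finset.mem_image.mp hx
    obtain ⟨k, hk, hk2⟩ := Finset.mem_image.mp hy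
    simp only [Finset.mem_Icc] at hj hk
    have := congrArg Complex.re hk2
    simp only [Complex.neg_re, Complex.natCast_re] at this
    have h1 : (1:ℝ) ≤ (k:ℝ) := by exact_mod_cast hk.1
    have h2 : (1:ℝ) ≤ (j:ℝ) := by exact_mod_cast hj.1
    linarith
  -- evaluation
  have heval : ∀ x ∈ S, (F - 1).eval x = 0 := by
    intro x hx
    rw [Finset.mem_union] at hx
    rcases hx with hx | hx
    · obtain ⟨k₀, hk₀, rfl⟩ := Finset.mem_image.mp hx
      simp only [Finset.mem_Icc] at hk₀
      rw [Polynomial.eval_sub, Polynomial.eval_one, sub_eq_zero, hF]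
      rw [Polynomial.eval_add, Polynomial.eval_finset_sum, Polynomial.eval_finset_sum]
      have hsum2 : ∀ k ∈ Icc 1 n,
          (Polynomial.C ((-1:ℂ)^(k-1) * k / (((n-k).factorial : ℂ) * ((m+k).factorial : ℂ)))
            * ((∏ j ∈ Icc 1 m, (Polynomial.C (j:ℂ) - X)) * ∏ j ∈ (Icc 1 n).erase k, (Polynomial.C (j:ℂ) + X))).eval (k₀:ℂ) = 0 := by
        intro k hk
        simp only [Polynomial.eval_mul, Polynomial.eval_prod, Polynomial.eval_sub,
          Polynomial.eval_add, Polynomial.eval_C, Polynomial.eval_X]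
        have : ∏ j ∈ Icc 1 m, ((j:ℂ) - k₀) = 0 :=
          Finset.prod_eq_zero (Finset.mem_Icc.mpr hk₀) (by simp)
        rw [this]; ring
      rw [Finset.sum_congr rfl hsum2, Finset.sum_const, smul_zero, add_zero]
      rw [Finset.sum_eq_single k₀]
      · simp only [Polynomial.eval_mul, Polynomial.eval_prod, Polynomial.eval_sub,
          Polynomial.eval_add, Polynomial.eval_C, Polynomial.eval_X]
        rw [pfd_prod_sub_C m k₀ hk₀.1 hk₀.2, pfd_prod_add_C n k₀]
        rw [← mul_assoc]
        exact pfd_scalar m n k₀ hk₀.1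
      · intro k hk hne
        simp only [Polynomial.eval_mul, Polynomial.eval_prod, Polynomial.eval_sub,
          Polynomial.eval_add, Polynomial.eval_C, Polynomial.eval_X]
        have : ∏ j ∈ (Icc 1 m).erase k, ((j:ℂ) - k₀) = 0 :=
          Finset.prod_eq_zero (Finset.mem_erase.mpr ⟨Ne.symm hne, Finset.mem_Icc.mpr hk₀⟩) (by simp)
        rw [this]; ring
      · intro h; exact absurd (Finset.mem_Icc.mpr hk₀) h
    · obtain ⟨k₀, hk₀, rfl⟩ := Finset.mem_image.mp hx
      simp only [Finset.mem_Icc] at hk₀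
      rw [Polynomial.eval_sub, Polynomial.eval_one, sub_eq_zero, hF]
      rw [Polynomial.eval_add, Polynomial.eval_finset_sum, Polynomial.eval_finset_sum]
      have hev1 : ∀ (s : Finset ℕ),
          (∏ j ∈ s, (Polynomial.C (j:ℂ) - X)).eval (-(k₀:ℂ)) = ∏ j ∈ s, ((j:ℂ) + k₀) := by
        intro s
        rw [Polynomial.eval_prod]
        exact Finset.prod_congr rfl (fun j _ => by
          simp [Polynomial.eval_sub, sub_neg_eq_add])
      have hev2 : ∀ (s : Finset ℕ),
          (∏ j ∈ s, (Polynomial.C (j:ℂ) + X)).eval (-(k₀:ℂ)) = ∏ j ∈ s, ((j:ℂ) - k₀) := by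
        intro s
        rw [Polynomial.eval_prod]
        exact Finset.prod_congr rfl (fun j _ => by
          simp [Polynomial.eval_add, sub_eq_add_neg])
      have hsum1 : ∀ k ∈ Icc 1 m,
          (Polynomial.C ((-1:ℂ)^(k-1) * k / (((m-k).factorial : ℂ) * ((n+k).factorial : ℂ)))
            * ((∏ j ∈ (Icc 1 m).erase k, (Polynomial.C (j:ℂ) - X)) * ∏ j ∈ Icc 1 n, (Polynomial.C (j:ℂ) + X))).eval (-(k₀:ℂ)) = 0 := by
        intro k hk
        rw [Polynomial.eval_mul, Polynomial.eval_mul, hev1, hev2]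
        have : ∏ j ∈ Icc 1 n, ((j:ℂ) - k₀) = 0 :=
          Finset.prod_eq_zero (Finset.mem_Icc.mpr hk₀) (by simp)
        rw [this]; ring
      rw [Finset.sum_congr rfl hsum1, Finset.sum_const, smul_zero, zero_add]
      rw [Finset.sum_eq_single k₀]
      · rw [Polynomial.eval_mul, Polynomial.eval_mul, Polynomial.eval_C, hev1, hev2]
        rw [pfd_prod_sub_C n k₀ hk₀.1 hk₀.2, pfd_prod_add_C m k₀]
        rw [mul_comm (((m+k₀).factorial : ℂ) / (k₀.factorial : ℂ)), ← mul_assoc]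
        exact pfd_scalar n m k₀ hk₀.1
      · intro k hk hne
        rw [Polynomial.eval_mul, Polynomial.eval_mul, hev1, hev2]
        have : ∏ j ∈ (Icc 1 n).erase k, ((j:ℂ) - k₀) = 0 :=
          Finset.prod_eq_zero (Finset.mem_erase.mpr ⟨Ne.symm hne, Finset.mem_Icc.mpr hk₀⟩) (by simp)
        rw [this]; ring
      · intro h; exact absurd (Finset.mem_Icc.mpr hk₀) h
  have hz : F - 1 = 0 := by
    apply Polynomial.eq_zero_of_natDegree_lt_card_of_eval_eq_zero' _ S heval
    have h1 : (F - 1).natDegree ≤ m + n - 1 := by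
      refine le_trans (Polynomial.natDegree_sub_le _ _) ?_
      simpa [Polynomial.natDegree_one] using hdegF
    rw [hcardS]
    omega
  exact sub_eq_zero.mp hz


lemma pfd_div_aux (a c T Q : ℂ) (hc : c ≠ 0) (hT : T ≠ 0) (hQ : Q ≠ 0) :
    a / c = a * (T * Q) * ((c * T) * Q)⁻¹ := by
  rw [div_eq_mul_inv, mul_inv, mul_inv]
  have h1 := mul_inv_cancel₀ hT
  have h2 := mul_inv_cancel₀ hQ
  calc a * c⁻¹ = a * c⁻¹ * ((T * T⁻¹) * (Q * Q⁻¹)) := by rw [h1, h2]; ring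
    _ = a * (T * Q) * (c⁻¹ * T⁻¹ * Q⁻¹) := by ring

lemma pfd_div_aux2 (a c P U : ℂ) (hc : c ≠ 0) (hP : P ≠ 0) (hU : U ≠ 0) :
    a / c = a * (P * U) * (P * (c * U))⁻¹ := by
  rw [div_eq_mul_inv, mul_inv, mul_inv]
  have h1 := mul_inv_cancel₀ hP
  have h2 := mul_inv_cancel₀ hU
  calc a * c⁻¹ = a * c⁻¹ * ((P * P⁻¹) * (U * U⁻¹)) := by rw [h1, h2]; ring
    _ = a * (P * U) * (P⁻¹ * (c⁻¹ * U⁻¹)) := by ring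

/-- Partial fraction decomposition of
`1/((m - iμ)⋯(1 - iμ)(1 + iμ)⋯(n + iμ))`. -/
theorem partial_fraction_decomposition (m n : ℕ) (hm : 1 ≤ m) (hn : 1 ≤ n) (μ : ℝ) :
    ((∏ j ∈ Icc 1 m, ((j : ℂ) - I * μ)) * ∏ j ∈ Icc 1 n, ((j : ℂ) + I * μ))⁻¹
      = (∑ k ∈ Icc 1 m,
            ((-1 : ℂ) ^ (k - 1) * k / (((m - k).factorial : ℂ) * ((n + k).factorial : ℂ)))
              / ((k : ℂ) - I * μ))
        + ∑ k ∈ Icc 1 n,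
            ((-1 : ℂ) ^ (k - 1) * k / (((n - k).factorial : ℂ) * ((m + k).factorial : ℂ)))
              / ((k : ℂ) + I * μ) := by
  have hE := congrArg (Polynomial.eval (I * (μ:ℂ))) (pfd_poly m n hm hn)
  simp only [Polynomial.eval_add, Polynomial.eval_finset_sum, Polynomial.eval_mul,
    Polynomial.eval_prod, Polynomial.eval_sub, Polynomial.eval_C, Polynomial.eval_X,
    Polynomial.eval_one] at hE
  have hsub : ∀ k ∈ Icc 1 m, ((k:ℂ) - I * μ) ≠ 0 := by
    intro k hk h
    have := congrArg Complex.re h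
    simp only [Complex.sub_re, Complex.natCast_re, Complex.mul_re, Complex.I_re,
      Complex.ofReal_re, Complex.I_im, Complex.ofReal_im, Complex.zero_re] at this
    rw [Finset.mem_Icc] at hk
    have : (k:ℝ) = 0 := by linarith
    have : k = 0 := by exact_mod_cast this
    omega
  have hadd : ∀ k ∈ Icc 1 n, ((k:ℂ) + I * μ) ≠ 0 := by
    intro k hk h
    have := congrArg Complex.re h
    simp only [Complex.add_re, Complex.natCast_re, Complex.mul_re, Complex.I_re,
      Complex.ofReal_re, Complex.I_im, Complex.ofReal_im, Complex.zero_re] at this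
    rw [Finset.mem_Icc] at hk
    have : (k:ℝ) = 0 := by linarith
    have : k = 0 := by exact_mod_cast this
    omega
  have hP : (∏ j ∈ Icc 1 m, ((j:ℂ) - I * μ)) ≠ 0 := Finset.prod_ne_zero_iff.mpr hsub
  have hQ : (∏ j ∈ Icc 1 n, ((j:ℂ) + I * μ)) ≠ 0 := Finset.prod_ne_zero_iff.mpr hadd
  have hterm1 : ∀ k ∈ Icc 1 m,
      ((-1 : ℂ) ^ (k - 1) * k / (((m - k).factorial : ℂ) * ((n + k).factorial : ℂ)))
          / ((k : ℂ) - I * μ)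
        = ((-1 : ℂ) ^ (k - 1) * k / (((m - k).factorial : ℂ) * ((n + k).factorial : ℂ)))
            * ((∏ j ∈ (Icc 1 m).erase k, ((j:ℂ) - I * μ)) * ∏ j ∈ Icc 1 n, ((j:ℂ) + I * μ))
            * ((∏ j ∈ Icc 1 m, ((j:ℂ) - I * μ)) * ∏ j ∈ Icc 1 n, ((j:ℂ) + I * μ))⁻¹ := by
    intro k hk
    rw [← Finset.mul_prod_erase _ _ hk]
    have h2 : (∏ j ∈ (Icc 1 m).erase k, ((j:ℂ) - I * μ)) ≠ 0 :=
      Finset.prod_ne_zero_iff.mpr (fun j hj => hsub j (Finset.mem_of_mem_erase hj))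
    exact pfd_div_aux _ _ _ _ (hsub k hk) h2 hQ
  have hterm2 : ∀ k ∈ Icc 1 n,
      ((-1 : ℂ) ^ (k - 1) * k / (((n - k).factorial : ℂ) * ((m + k).factorial : ℂ)))
          / ((k : ℂ) + I * μ)
        = ((-1 : ℂ) ^ (k - 1) * k / (((n - k).factorial : ℂ) * ((m + k).factorial : ℂ)))
            * ((∏ j ∈ Icc 1 m, ((j:ℂ) - I * μ)) * ∏ j ∈ (Icc 1 n).erase k, ((j:ℂ) + I * μ))
            * ((∏ j ∈ Icc 1 m, ((j:ℂ) - I * μ)) * ∏ j ∈ Icc 1 n, ((j:ℂ) + I * μ))⁻¹ := by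
    intro k hk
    rw [← Finset.mul_prod_erase _ _ hk]
    have h2 : (∏ j ∈ (Icc 1 n).erase k, ((j:ℂ) + I * μ)) ≠ 0 :=
      Finset.prod_ne_zero_iff.mpr (fun j hj => hadd j (Finset.mem_of_mem_erase hj))
    exact pfd_div_aux2 _ _ _ _ (hadd k hk) hP h2
  rw [Finset.sum_congr rfl hterm1, Finset.sum_congr rfl hterm2,
    ← Finset.sum_mul, ← Finset.sum_mul, ← add_mul, hE, one_mul]
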